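/- Let E be a finite-dimensional real inner product space, p ≥ 1 an integer, c > 0 and u_min ∈ (0,1]. Let f : E → ℝ, x : ℕ → E, u : ℕ → ℝ and R : ℕ → ℝ be such that R 0 = f(x 0), u (k+1) ∈ [u_min, 1] for all k, R (k+1) = (1 - u (k+1))·R k + u (k+1)·f(x (k+1)) for all k, and f(x (k+1)) ≤ R k - c·‖x (k+1) - x k‖^(p+1) for all k. Then the sequence (R k) is monotonically decreasing and satisfies R (k+1) ≤ R k - u_min·c·‖x (k+1) - x k‖^(p+1) for all k ≥ 0. -/
import Mathlib


/-- Lemma 1(2): the reference sequence of NHOTA is monotonically decreasing and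
satisfies the sufficient decrease `R (k+1) ≤ R k - u_min·c·‖x (k+1) - x k‖^(p+1)`. -/
theorem nhota_reference_sufficient_decrease
    {E : Type*} [NormedAddCommGroup E] [InnerProductSpace ℝ E] [FiniteDimensional ℝ E]
    (p : ℕ) (hp : 1 ≤ p) (c u_min : ℝ) (hc : 0 < c) (humin : 0 < u_min ∧ u_min ≤ 1)
    (f : E → ℝ) (x : ℕ → E) (u : ℕ → ℝ) (R : ℕ → ℝ)
    (hR0 : R 0 = f (x 0))
    (hu : ∀ k : ℕ, u_min ≤ u (k + 1) ∧ u (k + 1) ≤ 1)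
    (hRrec : ∀ k : ℕ, R (k + 1) = (1 - u (k + 1)) * R k + u (k + 1) * f (x (k + 1)))
    (hdec : ∀ k : ℕ, f (x (k + 1)) ≤ R k - c * ‖x (k + 1) - x k‖ ^ (p + 1)) :
    Antitone R ∧
      ∀ k : ℕ, R (k + 1) ≤ R k - u_min * c * ‖x (k + 1) - x k‖ ^ (p + 1) := by
  have key : ∀ k : ℕ, R (k + 1) ≤ R k - u_min * c * ‖x (k + 1) - x k‖ ^ (p + 1) := by
    intro k
    have hn : (0:ℝ) ≤ ‖x (k + 1) - x k‖ ^ (p + 1) := by positivity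
    have huk := hu k
    have hukpos : 0 < u (k + 1) := lt_of_lt_of_le humin.1 huk.1
    have h1 : u (k + 1) * f (x (k + 1)) ≤
        u (k + 1) * (R k - c * ‖x (k + 1) - x k‖ ^ (p + 1)) :=
      mul_le_mul_of_nonneg_left (hdec k) hukpos.le
    have h2 : u_min * (c * ‖x (k + 1) - x k‖ ^ (p + 1)) ≤
        u (k + 1) * (c * ‖x (k + 1) - x k‖ ^ (p + 1)) :=
      mul_le_mul_of_nonneg_right huk.1 (by positivity)
    rw [hRrec k]
    nlinarith
  refine ⟨antitone_nat_of_succ_le fun k => ?_, key⟩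
  have hn : (0:ℝ) ≤ ‖x (k + 1) - x k‖ ^ (p + 1) := by positivity
  nlinarith [key k, mul_nonneg (mul_nonneg humin.1.le hc.le) hn]
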